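/- Let ρ be a probability measure on ℝ^d, let φ : ℝ^d × ℝ^d → ℝ be measurable with |φ(x,ω)| ≤ 1 for all x and ω, let α ∈ L²(ρ), and define f(x) = ∫ α(ω) φ(x,ω) dρ(ω) and ‖f‖_ρ = (∫ α(ω)² dρ(ω))^{1/2}. Fix x ∈ ℝ^d, N ≥ 1, and δ ∈ (0,1). Set T = √N · ‖f‖_ρ and define the truncation α_{≤T}(ω) = α(ω)·1_{|α(ω)| ≤ T}. Then, with probability at least 1 − δ over ω₁,…,ω_N drawn i.i.d. from ρ, the function f^♯(x) = (1/N) ∑_{k=1}^N α_{≤T}(ω_k) φ(x,ω_k) satisfies |f(x) − f^♯(x)| ≤ 12 ‖f‖_ρ log(2/δ) / √N. In particular, there exist coefficients c₁^♯,…,c_N^♯ ∈ ℝ such that ∑_{k=1}^N c_k^♯ φ(x,ω_k) approximates f(x) to accuracy 12 ‖f‖_ρ log(2/δ)/√N with probability at least 1 − δ. -/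

import Mathlib

open MeasureTheory Real

section helpers

lemma exp_le_one_add_add_sq {u : ℝ} (hu : |u| ≤ 1) : Real.exp u ≤ 1 + u + u ^ 2 := by
  have h := Real.exp_bound hu (n := 2) (by norm_num)
  have h2 : |Real.exp u - (1 + u)| ≤ u ^ 2 * (3 / (2 * 2)) := by
    simpa [Finset.sum_range_succ] using h
  have := (abs_le.1 h2).2
  nlinarith [sq_abs u, sq_nonneg u]

lemma pi_integral_pow {Ω : Type*} [MeasurableSpace Ω] (ρ : Measure Ω) [IsProbabilityMeasure ρ]
    (N : ℕ) (F : Ω → ℝ) :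
    ∫ w : Fin N → Ω, ∏ k : Fin N, F (w k) ∂(Measure.pi fun _ => ρ) = (∫ ω, F ω ∂ρ) ^ N := by
  letI : MeasureSpace Ω := ⟨ρ⟩
  haveI : SigmaFinite (volume : Measure Ω) := by show SigmaFinite ρ; infer_instance
  have hvol : (Measure.pi fun _ : Fin N => ρ) = (volume : Measure (Fin N → Ω)) := rfl
  rw [hvol]
  exact (MeasureTheory.integral_fintype_prod_eq_pow (ι := Fin N) F (μ := ρ)).trans (by rw [Fintype.card_fin])

lemma pi_integrable_prod {Ω : Type*} [MeasurableSpace Ω] (ρ : Measure Ω) [IsProbabilityMeasure ρ]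
    (N : ℕ) (F : Ω → ℝ) (hF : Integrable F ρ) :
    Integrable (fun w : Fin N → Ω => ∏ k : Fin N, F (w k)) (Measure.pi fun _ => ρ) := by
  letI : MeasureSpace Ω := ⟨ρ⟩
  haveI : SigmaFinite (volume : Measure Ω) := by show SigmaFinite ρ; infer_instance
  have hvol : (Measure.pi fun _ : Fin N => ρ) = (volume : Measure (Fin N → Ω)) := rfl
  rw [hvol]
  exact MeasureTheory.Integrable.fintype_prod (fun _ => hF)

/-- Chernoff/Bernstein-type tail bound for sums of iid bounded centered variables
over a finite product measure. -/
lemma chernoff_tail {Ω : Type*} [MeasurableSpace Ω] (ρ : Measure Ω) [IsProbabilityMeasure ρ]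
    (N : ℕ) (h : Ω → ℝ) (hmeas : Measurable h) (c : ℝ) (hbd : ∀ ω, |h ω| ≤ c)
    (hmean : ∫ ω, h ω ∂ρ = 0) (t : ℝ) (ht : 0 ≤ t) (htc : t * c ≤ 1) (ε : ℝ) :
    ((Measure.pi fun _ : Fin N => ρ)
        {w : Fin N → Ω | ε ≤ ∑ k : Fin N, h (w k)}).toReal
      ≤ Real.exp (-t * ε) * (1 + t ^ 2 * ∫ ω, h ω ^ 2 ∂ρ) ^ N := by
  have hbd1 : ∀ ω, |t * h ω| ≤ 1 := by
    intro ω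
    rw [abs_mul, abs_of_nonneg ht]
    calc t * |h ω| ≤ t * c := by
          rcases ht.eq_or_lt with h0 | h0
          · simp [← h0]
          · exact mul_le_mul_of_nonneg_left (hbd ω) ht
      _ ≤ 1 := htc
  have hexp_meas : Measurable fun ω => Real.exp (t * h ω) := (hmeas.const_mul t).exp
  have hexp_bd : ∀ ω, ‖Real.exp (t * h ω)‖ ≤ Real.exp 1 := by
    intro ω
    rw [Real.norm_eq_abs, abs_of_pos (Real.exp_pos _)]
    exact Real.exp_le_exp.2 ((le_abs_self _).trans (hbd1 ω))
  have hexp_int : Integrable (fun ω => Real.exp (t * h ω)) ρ :=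
    (integrable_const (Real.exp 1)).mono' hexp_meas.aestronglyMeasurable
      (Filter.Eventually.of_forall hexp_bd)
  have hkey : (fun w : Fin N → Ω => Real.exp (t * ∑ k : Fin N, h (w k)))
      = fun w => ∏ k : Fin N, Real.exp (t * h (w k)) := by
    funext w
    rw [Finset.mul_sum, Real.exp_sum]
  have hint : Integrable (fun w : Fin N → Ω => Real.exp (t * ∑ k : Fin N, h (w k)))
      (Measure.pi fun _ => ρ) := by
    rw [hkey]
    exact pi_integrable_prod ρ N _ hexp_int
  have hchernoff := ProbabilityTheory.measure_ge_le_exp_mul_mgf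
    (X := fun w : Fin N → Ω => ∑ k : Fin N, h (w k))
    (μ := Measure.pi fun _ : Fin N => ρ) (t := t) ε ht hint
  refine hchernoff.trans ?_
  have hmgf : ProbabilityTheory.mgf (fun w : Fin N → Ω => ∑ k : Fin N, h (w k))
      (Measure.pi fun _ => ρ) t = (∫ ω, Real.exp (t * h ω) ∂ρ) ^ N := by
    rw [ProbabilityTheory.mgf, hkey]
    exact pi_integral_pow ρ N (fun ω => Real.exp (t * h ω))
  rw [hmgf]
  gcongr
  have hsq_int : Integrable (fun ω => h ω ^ 2) ρ := by
    refine (integrable_const (c ^ 2)).mono' (hmeas.pow_const 2).aestronglyMeasurable ?_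
    refine Filter.Eventually.of_forall fun ω => ?_
    rw [Real.norm_eq_abs, abs_of_nonneg (sq_nonneg _)]
    calc h ω ^ 2 = |h ω| ^ 2 := (sq_abs _).symm
      _ ≤ c ^ 2 := by
          have := hbd ω
          nlinarith [abs_nonneg (h ω)]
  have hh_int : Integrable h ρ := by
    refine (integrable_const c).mono' hmeas.aestronglyMeasurable ?_
    exact Filter.Eventually.of_forall fun ω => by simpa using hbd ω
  calc ∫ ω, Real.exp (t * h ω) ∂ρ
      ≤ ∫ ω, (1 + t * h ω + t ^ 2 * h ω ^ 2) ∂ρ := by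
        refine integral_mono hexp_int ?_ fun ω => ?_
        · exact (integrable_const 1).add ((hh_int.const_mul t)) |>.add
            (hsq_int.const_mul (t ^ 2))
        · have := exp_le_one_add_add_sq (hbd1 ω)
          calc Real.exp (t * h ω) ≤ 1 + t * h ω + (t * h ω) ^ 2 := this
            _ = 1 + t * h ω + t ^ 2 * h ω ^ 2 := by ring
    _ = 1 + t ^ 2 * ∫ ω, h ω ^ 2 ∂ρ := by
        have hI1 : Integrable (fun ω => 1 + t * h ω) ρ :=
          (integrable_const 1).add (hh_int.const_mul t)
        have hI1' : Integrable (fun ω => (1 : ℝ)) ρ := integrable_const 1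
        have hI1'' : Integrable (fun ω => t * h ω) ρ := hh_int.const_mul t
        have hI2 : Integrable (fun ω => t ^ 2 * h ω ^ 2) ρ := hsq_int.const_mul _
        rw [integral_add hI1 hI2, integral_add hI1' hI1'', integral_const_mul,
          integral_const_mul, hmean]
        simp

lemma abs_integral_le {Ω : Type*} [MeasurableSpace Ω] {ρ : Measure Ω} (F : Ω → ℝ) :
    |∫ ω, F ω ∂ρ| ≤ ∫ ω, |F ω| ∂ρ := by
  calc |∫ ω, F ω ∂ρ| = ‖∫ ω, F ω ∂ρ‖ := (Real.norm_eq_abs _).symm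
    _ ≤ ∫ ω, ‖F ω‖ ∂ρ := norm_integral_le_integral_norm _
    _ = ∫ ω, |F ω| ∂ρ := by simp [Real.norm_eq_abs]

end helpers

set_option maxHeartbeats 1000000 in
/-- Random feature approximation (Theorem 2 of the paper): with truncation level
`T = √N ⬝ ‖f‖_ρ`, the truncated Monte Carlo random feature estimator approximates
`f(x)` to accuracy `12 ‖f‖_ρ log(2/δ) / √N` with probability at least `1 - δ`
over i.i.d. samples `ω₁, …, ω_N ∼ ρ`. -/
theorem random_feature_approximation
    {d : ℕ} (ρ : Measure (Fin d → ℝ)) [IsProbabilityMeasure ρ]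
    (φ : (Fin d → ℝ) → (Fin d → ℝ) → ℝ)
    (hφmeas : Measurable (Function.uncurry φ))
    (hφbd : ∀ x ω, |φ x ω| ≤ 1)
    (α : (Fin d → ℝ) → ℝ) (hα : MemLp α 2 ρ)
    (f : (Fin d → ℝ) → ℝ)
    (hf : ∀ x, f x = ∫ ω, α ω * φ x ω ∂ρ)
    (nf : ℝ) (hnf : nf = Real.sqrt (∫ ω, (α ω) ^ 2 ∂ρ))
    (x : Fin d → ℝ) (N : ℕ) (hN : 1 ≤ N)
    (δ : ℝ) (hδ : δ ∈ Set.Ioo (0 : ℝ) 1)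
    (T : ℝ) (hT : T = Real.sqrt N * nf) :
    ENNReal.ofReal (1 - δ) ≤
      (Measure.pi fun _ : Fin N => ρ)
        {w : Fin N → (Fin d → ℝ) |
          |f x - (1 / (N : ℝ)) * ∑ k : Fin N,
              (if |α (w k)| ≤ T then α (w k) else 0) * φ x (w k)|
            ≤ 12 * nf * Real.log (2 / δ) / Real.sqrt N} := by
  obtain ⟨hδ0, hδ1⟩ := hδ
  have hNpos : (0 : ℝ) < N := by exact_mod_cast hN
  have hsN : 0 < Real.sqrt N := Real.sqrt_pos.2 hNpos
  set L : ℝ := Real.log (2 / δ) with hLdef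
  have hL2 : Real.log 2 ≤ L := by
    apply Real.log_le_log (by norm_num)
    rw [le_div_iff₀ hδ0]
    nlinarith
  have hL069 : (0.6931 : ℝ) ≤ L := le_trans (by linarith [Real.log_two_gt_d9]) hL2
  have hI0 : 0 ≤ ∫ ω, (α ω) ^ 2 ∂ρ := integral_nonneg fun ω => sq_nonneg _
  have hnf0 : 0 ≤ nf := hnf ▸ Real.sqrt_nonneg _
  -- trivial case `nf = 0`
  rcases eq_or_lt_of_le hnf0 with hnf_eq | hnfpos
  · have hIzero : ∫ ω, (α ω) ^ 2 ∂ρ = 0 := by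
      have := hnf ▸ hnf_eq
      nlinarith [Real.sq_sqrt hI0, Real.sqrt_nonneg (∫ ω, (α ω) ^ 2 ∂ρ)]
    have hαae : α =ᵐ[ρ] 0 := by
      have h0 : (fun ω => (α ω) ^ 2) =ᵐ[ρ] 0 :=
        (integral_eq_zero_iff_of_nonneg (fun ω => sq_nonneg _) hα.integrable_sq).1 hIzero
      filter_upwards [h0] with ω hω
      have : (α ω) ^ 2 = 0 := hω
      exact pow_eq_zero_iff (n := 2) (by norm_num) |>.1 this
    have hfx0 : f x = 0 := by
      rw [hf x]
      rw [integral_eq_zero_of_ae]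
      filter_upwards [hαae] with ω hω
      simp [hω]
    have hT0 : T = 0 := by rw [hT, ← hnf_eq, mul_zero]
    have hset : {w : Fin N → (Fin d → ℝ) |
        |f x - (1 / (N : ℝ)) * ∑ k : Fin N,
            (if |α (w k)| ≤ T then α (w k) else 0) * φ x (w k)|
          ≤ 12 * nf * Real.log (2 / δ) / Real.sqrt N} = Set.univ := by
      apply Set.eq_univ_of_forall
      intro w
      have hterm : ∀ k : Fin N,
          (if |α (w k)| ≤ T then α (w k) else 0) * φ x (w k) = 0 := by
        intro k
        rw [hT0]
        split_ifs with hk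
        · have : α (w k) = 0 := abs_nonpos_iff.1 hk
          rw [this, zero_mul]
        · rw [zero_mul]
      show |f x - (1 / (N : ℝ)) * ∑ k : Fin N, _| ≤ _
      rw [Finset.sum_congr rfl fun k _ => hterm k]
      simp [hfx0, ← hnf_eq]
    rw [hset, measure_univ]
    exact ENNReal.ofReal_le_one.2 (by linarith)
  -- main case `0 < nf`
  have hnf2 : nf ^ 2 = ∫ ω, (α ω) ^ 2 ∂ρ := by rw [hnf]; exact Real.sq_sqrt hI0
  have hTpos : 0 < T := hT ▸ mul_pos hsN hnfpos
  -- measurable representative of α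
  set α' : (Fin d → ℝ) → ℝ := hα.1.aemeasurable.mk α with hα'def
  have hα'meas : Measurable α' := hα.1.aemeasurable.measurable_mk
  have hαα' : α =ᵐ[ρ] α' := hα.1.aemeasurable.ae_eq_mk
  have hφxmeas : Measurable fun ω => φ x ω := hφmeas.comp measurable_prodMk_left
  set g : (Fin d → ℝ) → ℝ := fun ω => (if |α' ω| ≤ T then α' ω else 0) * φ x ω with hgdef
  have hgmeas : Measurable g :=
    (Measurable.ite (measurableSet_le hα'meas.abs measurable_const) hα'meas
      measurable_const).mul hφxmeas
  have htrunc_bd : ∀ ω, |if |α' ω| ≤ T then α' ω else 0| ≤ T := by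
    intro ω; split_ifs with hω
    · exact hω
    · simpa using hTpos.le
  have htrunc_bdα : ∀ ω, |if |α' ω| ≤ T then α' ω else 0| ≤ |α' ω| := by
    intro ω; split_ifs with hω
    · exact le_rfl
    · simpa using abs_nonneg _
  have hg_bd_T : ∀ ω, |g ω| ≤ T := by
    intro ω
    rw [hgdef, abs_mul]
    calc |if |α' ω| ≤ T then α' ω else 0| * |φ x ω|
        ≤ T * 1 := mul_le_mul (htrunc_bd ω) (hφbd x ω) (abs_nonneg _) hTpos.le
      _ = T := mul_one T
  have hg_bd_α : ∀ ω, |g ω| ≤ |α' ω| := by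
    intro ω
    rw [hgdef, abs_mul]
    calc |if |α' ω| ≤ T then α' ω else 0| * |φ x ω|
        ≤ |α' ω| * 1 := mul_le_mul (htrunc_bdα ω) (hφbd x ω) (abs_nonneg _) (abs_nonneg _)
      _ = |α' ω| := mul_one _
  -- integrability facts
  have hα2_int : Integrable (fun ω => (α ω) ^ 2) ρ := hα.integrable_sq
  have hα'2_int : Integrable (fun ω => (α' ω) ^ 2) ρ :=
    hα2_int.congr (hαα'.mono fun ω hω => by simp only [hω])
  have hα_int : Integrable α ρ := hα.integrable one_le_two
  have hα'_int : Integrable α' ρ := hα_int.congr hαα'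
  have hg_int : Integrable g ρ :=
    (integrable_const T).mono' hgmeas.aestronglyMeasurable
      (Filter.Eventually.of_forall fun ω => by simpa using hg_bd_T ω)
  have hg2_int : Integrable (fun ω => g ω ^ 2) ρ := by
    refine (integrable_const (T ^ 2)).mono' (hgmeas.pow_const 2).aestronglyMeasurable ?_
    refine Filter.Eventually.of_forall fun ω => ?_
    rw [Real.norm_eq_abs, abs_of_nonneg (sq_nonneg _)]
    calc g ω ^ 2 = |g ω| ^ 2 := (sq_abs _).symm
      _ ≤ T ^ 2 := by nlinarith [hg_bd_T ω, abs_nonneg (g ω)]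
  have hαα'sq : (fun ω => (α ω) ^ 2) =ᵐ[ρ] fun ω => (α' ω) ^ 2 :=
    hαα'.mono fun ω hω => by simp only [hω]
  have hIα' : ∫ ω, (α' ω) ^ 2 ∂ρ = nf ^ 2 := by
    rw [hnf2]
    exact integral_congr_ae hαα'sq.symm
  set m : ℝ := ∫ ω, g ω ∂ρ with hmdef
  -- bias bound
  have hα'φ_int : Integrable (fun ω => α' ω * φ x ω) ρ := by
    refine hα'_int.abs.mono' (hα'meas.mul hφxmeas).aestronglyMeasurable ?_
    refine Filter.Eventually.of_forall fun ω => ?_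
    rw [Real.norm_eq_abs, abs_mul]
    calc |α' ω| * |φ x ω| ≤ |α' ω| * 1 :=
          mul_le_mul_of_nonneg_left (hφbd x ω) (abs_nonneg _)
      _ = |α' ω| := mul_one _
  have hfx : f x = ∫ ω, α' ω * φ x ω ∂ρ := by
    rw [hf x]
    exact integral_congr_ae (hαα'.mono fun ω hω => by simp only [hω])
  have hbias : |f x - m| ≤ nf / Real.sqrt N := by
    have hr : f x - m = ∫ ω, (α' ω * φ x ω - g ω) ∂ρ := by
      rw [hfx, hmdef, ← integral_sub hα'φ_int hg_int]
    have hr_bd : ∀ ω, |α' ω * φ x ω - g ω| ≤ (α' ω) ^ 2 / T := by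
      intro ω
      show |α' ω * φ x ω - (if |α' ω| ≤ T then α' ω else 0) * φ x ω| ≤ (α' ω) ^ 2 / T
      split_ifs with hω
      · rw [sub_self, abs_zero]
        exact div_nonneg (sq_nonneg (α' ω)) hTpos.le
      · push_neg at hω
        rw [zero_mul, sub_zero, abs_mul, le_div_iff₀ hTpos]
        calc |α' ω| * |φ x ω| * T ≤ |α' ω| * 1 * |α' ω| := by
              apply mul_le_mul
              · exact mul_le_mul_of_nonneg_left (hφbd x ω) (abs_nonneg _)
              · exact hω.le
              · exact hTpos.le
              · positivity
          _ = (α' ω) ^ 2 := by rw [mul_one, ← sq_abs]; ring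
    rw [hr]
    calc |∫ ω, (α' ω * φ x ω - g ω) ∂ρ| ≤ ∫ ω, |α' ω * φ x ω - g ω| ∂ρ :=
          abs_integral_le _
      _ ≤ ∫ ω, (α' ω) ^ 2 / T ∂ρ := by
          refine integral_mono (hα'φ_int.sub hg_int).abs (hα'2_int.div_const T) ?_
          exact hr_bd
      _ = nf ^ 2 / T := by rw [integral_div, hIα']
      _ = nf / Real.sqrt N := by
          rw [hT]
          field_simp
  -- centered variable and Chernoff setup
  set h : (Fin d → ℝ) → ℝ := fun ω => g ω - m with hhdef
  have hm_bd : |m| ≤ T := by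
    calc |m| ≤ ∫ ω, |g ω| ∂ρ := abs_integral_le _
      _ ≤ ∫ ω, T ∂ρ := integral_mono hg_int.abs (integrable_const T) hg_bd_T
      _ = T := by simp
  have hh_meas : Measurable h := hgmeas.sub measurable_const
  have hh_bd : ∀ ω, |h ω| ≤ 2 * T := by
    intro ω
    calc |h ω| ≤ |g ω| + |m| := abs_sub _ _
      _ ≤ T + T := add_le_add (hg_bd_T ω) hm_bd
      _ = 2 * T := by ring
  have hh_mean : ∫ ω, h ω ∂ρ = 0 := by
    rw [hhdef]
    rw [integral_sub hg_int (integrable_const m)]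
    simp [hmdef]
  have hh2_int : Integrable (fun ω => h ω ^ 2) ρ := by
    have : (fun ω => h ω ^ 2) = fun ω => g ω ^ 2 - 2 * m * g ω + m ^ 2 := by
      funext ω; rw [hhdef]; ring
    rw [this]
    exact (hg2_int.sub ((hg_int.const_mul (2 * m)))).add (integrable_const (m ^ 2))
  have hvar : ∫ ω, h ω ^ 2 ∂ρ ≤ nf ^ 2 := by
    have hcalc : ∫ ω, h ω ^ 2 ∂ρ = (∫ ω, g ω ^ 2 ∂ρ) - m ^ 2 := by
      have heq : (fun ω => h ω ^ 2) = fun ω => g ω ^ 2 - 2 * m * g ω + m ^ 2 := by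
        funext ω; rw [hhdef]; ring
      have hIa : Integrable (fun ω => g ω ^ 2 - 2 * m * g ω) ρ :=
        hg2_int.sub (hg_int.const_mul (2 * m))
      have hIb : Integrable (fun ω => (m ^ 2 : ℝ)) ρ := integrable_const _
      have hIc : Integrable (fun ω => 2 * m * g ω) ρ := hg_int.const_mul (2 * m)
      rw [heq, integral_add hIa hIb, integral_sub hg2_int hIc, integral_const_mul]
      simp only [integral_const, measure_univ, ENNReal.toReal_one, smul_eq_mul, one_mul, ← hmdef, probReal_univ]
      ring
    rw [hcalc]
    have hg2_le : ∫ ω, g ω ^ 2 ∂ρ ≤ nf ^ 2 := by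
      rw [← hIα']
      refine integral_mono hg2_int hα'2_int fun ω => ?_
      calc g ω ^ 2 = |g ω| ^ 2 := (sq_abs _).symm
        _ ≤ |α' ω| ^ 2 := by nlinarith [hg_bd_α ω, abs_nonneg (g ω)]
        _ = (α' ω) ^ 2 := sq_abs _
    nlinarith [sq_nonneg m]
  set t : ℝ := 1 / (2 * T) with htdef
  have ht0 : 0 ≤ t := by positivity
  have htc : t * (2 * T) ≤ 1 := by
    rw [htdef]
    rw [div_mul_eq_mul_div, one_mul, div_self (by positivity)]
  set s : ℝ := (12 * L - 1) * nf / Real.sqrt N with hsdef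
  have h12L : (1 : ℝ) < 12 * L := by nlinarith
  have hspos : 0 < s := by
    rw [hsdef]
    exact div_pos (mul_pos (by linarith) hnfpos) hsN
  -- the exponent computation
  have hT2 : T ^ 2 = N * nf ^ 2 := by
    rw [hT, mul_pow, Real.sq_sqrt hNpos.le]
  have hNsqrt : (N : ℝ) = Real.sqrt N * Real.sqrt N := (Real.mul_self_sqrt hNpos.le).symm
  have hms : Real.sqrt N * Real.sqrt N = (N : ℝ) := Real.mul_self_sqrt hNpos.le
  have hexp_arg : t * ((N : ℝ) * s) = (12 * L - 1) / 2 := by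
    have h1 : (N : ℝ) * s = Real.sqrt N * ((12 * L - 1) * nf) := by
      rw [hsdef]
      field_simp
      linear_combination (1 - 12 * L) * hms
    rw [h1, htdef, hT, div_mul_eq_mul_div, one_mul, div_eq_iff (by positivity)]
    ring
  have hbound_one : Real.exp (-t * ((N : ℝ) * s)) * (1 + t ^ 2 * ∫ ω, h ω ^ 2 ∂ρ) ^ N
      ≤ δ / 2 := by
    have hvar' : t ^ 2 * ∫ ω, h ω ^ 2 ∂ρ ≤ 1 / (4 * N) := by
      have ht2 : t ^ 2 = 1 / (4 * T ^ 2) := by rw [htdef]; field_simp; ring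
      rw [ht2, hT2]
      rw [div_mul_eq_mul_div, one_mul, div_le_div_iff₀ (by positivity) (by positivity)]
      calc (∫ ω, h ω ^ 2 ∂ρ) * (4 * N) ≤ nf ^ 2 * (4 * N) := by
            apply mul_le_mul_of_nonneg_right hvar (by positivity)
        _ = 1 * (4 * (N * nf ^ 2)) := by ring
    have hvar_nonneg : 0 ≤ t ^ 2 * ∫ ω, h ω ^ 2 ∂ρ := by
      apply mul_nonneg (sq_nonneg t)
      exact integral_nonneg fun ω => sq_nonneg _
    have hpow : (1 + t ^ 2 * ∫ ω, h ω ^ 2 ∂ρ) ^ N ≤ Real.exp (1 / 4) := by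
      calc (1 + t ^ 2 * ∫ ω, h ω ^ 2 ∂ρ) ^ N ≤ (1 + 1 / (4 * N)) ^ N := by
            apply pow_le_pow_left₀ (by linarith) (by linarith)
        _ ≤ Real.exp (1 / (4 * N)) ^ N := by
            apply pow_le_pow_left₀ (by positivity)
            linarith [Real.add_one_le_exp (1 / (4 * (N : ℝ)))]
        _ = Real.exp ((N : ℝ) * (1 / (4 * N))) := by
            rw [← Real.exp_nat_mul]
        _ = Real.exp (1 / 4) := by
            congr 1
            field_simp
    calc Real.exp (-t * ((N : ℝ) * s)) * (1 + t ^ 2 * ∫ ω, h ω ^ 2 ∂ρ) ^ N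
        ≤ Real.exp (-t * ((N : ℝ) * s)) * Real.exp (1 / 4) :=
          mul_le_mul_of_nonneg_left hpow (Real.exp_pos _).le
      _ = Real.exp (-(12 * L - 1) / 2 + 1 / 4) := by
          rw [← Real.exp_add, neg_mul, hexp_arg, neg_div]
      _ ≤ Real.exp (-L) := by
          apply Real.exp_le_exp.2
          nlinarith
      _ = δ / 2 := by
          rw [hLdef, Real.exp_neg, Real.exp_log (by positivity)]
          rw [inv_div]
  -- the two bad events
  set bad1 : Set (Fin N → (Fin d → ℝ)) :=
    {w | (N : ℝ) * s ≤ ∑ k : Fin N, h (w k)} with hbad1def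
  set bad2 : Set (Fin N → (Fin d → ℝ)) :=
    {w | (N : ℝ) * s ≤ ∑ k : Fin N, (m - g (w k))} with hbad2def
  have hb1 := chernoff_tail ρ N h hh_meas (2 * T) hh_bd hh_mean t ht0 htc ((N : ℝ) * s)
  have hb2 : ((Measure.pi fun _ : Fin N => ρ) bad2).toReal ≤ δ / 2 := by
    have hmean2 : ∫ ω, (m - g ω) ∂ρ = 0 := by
      have : (fun ω => m - g ω) = fun ω => -h ω := by funext ω; rw [hhdef]; ring
      rw [this, integral_neg, hh_mean, neg_zero]
    have hbd2 : ∀ ω, |m - g ω| ≤ 2 * T := by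
      intro ω
      rw [show m - g ω = -h ω by rw [hhdef]; ring, abs_neg]
      exact hh_bd ω
    have hmeas2 : Measurable fun ω => m - g ω := measurable_const.sub hgmeas
    have := chernoff_tail ρ N (fun ω => m - g ω) hmeas2 (2 * T) hbd2 hmean2 t ht0 htc
      ((N : ℝ) * s)
    refine le_trans this ?_
    have hsq : (fun ω => (m - g ω) ^ 2) = fun ω => h ω ^ 2 := by
      funext ω; rw [hhdef]; ring
    rw [show (∫ ω, (m - g ω) ^ 2 ∂ρ) = ∫ ω, h ω ^ 2 ∂ρ by rw [hsq]]
    exact hbound_one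
  have hb1' : ((Measure.pi fun _ : Fin N => ρ) bad1).toReal ≤ δ / 2 :=
    le_trans hb1 hbound_one
  -- measure of the union of bad events
  have hbad1_le : (Measure.pi fun _ : Fin N => ρ) bad1 ≤ ENNReal.ofReal (δ / 2) :=
    (ENNReal.le_ofReal_iff_toReal_le (measure_ne_top _ _) (by positivity)).2 hb1'
  have hbad2_le : (Measure.pi fun _ : Fin N => ρ) bad2 ≤ ENNReal.ofReal (δ / 2) :=
    (ENNReal.le_ofReal_iff_toReal_le (measure_ne_top _ _) (by positivity)).2 hb2
  have hbad_le : (Measure.pi fun _ : Fin N => ρ) (bad1 ∪ bad2) ≤ ENNReal.ofReal δ := by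
    calc (Measure.pi fun _ : Fin N => ρ) (bad1 ∪ bad2)
        ≤ (Measure.pi fun _ : Fin N => ρ) bad1 + (Measure.pi fun _ : Fin N => ρ) bad2 :=
          measure_union_le _ _
      _ ≤ ENNReal.ofReal (δ / 2) + ENNReal.ofReal (δ / 2) := add_le_add hbad1_le hbad2_le
      _ = ENNReal.ofReal δ := by
          rw [← ENNReal.ofReal_add (by positivity) (by positivity)]
          norm_num
  have hbad_meas : MeasurableSet (bad1 ∪ bad2) := by
    apply MeasurableSet.union
    · exact measurableSet_le measurable_const
        (Finset.measurable_sum _ fun k _ => hh_meas.comp (measurable_pi_apply k))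
    · exact measurableSet_le measurable_const
        (Finset.measurable_sum _ fun k _ =>
          (measurable_const.sub hgmeas).comp (measurable_pi_apply k))
  -- the null set where α and α' differ
  set D : Set (Fin N → (Fin d → ℝ)) :=
    ⋃ k : Fin N, (fun w => w k) ⁻¹' {ω | ¬ α ω = α' ω} with hDdef
  have hnull : ρ {ω | ¬ α ω = α' ω} = 0 := ae_iff.1 hαα'
  have hD : (Measure.pi fun _ : Fin N => ρ) D = 0 :=
    measure_iUnion_null fun k => Measure.pi_eval_preimage_null _ hnull
  -- containment: outside the bad events and off the null set, the estimate holds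
  have hsubset : (bad1 ∪ bad2)ᶜ \ D ⊆
      {w : Fin N → (Fin d → ℝ) |
        |f x - (1 / (N : ℝ)) * ∑ k : Fin N,
            (if |α (w k)| ≤ T then α (w k) else 0) * φ x (w k)|
          ≤ 12 * nf * Real.log (2 / δ) / Real.sqrt N} := by
    rintro w ⟨hwB, hwD⟩
    have hα_eq : ∀ k : Fin N, α (w k) = α' (w k) := by
      intro k
      by_contra hc
      exact hwD (Set.mem_iUnion.2 ⟨k, hc⟩)
    have hsum_eq : ∑ k : Fin N, (if |α (w k)| ≤ T then α (w k) else 0) * φ x (w k)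
        = ∑ k : Fin N, g (w k) := by
      refine Finset.sum_congr rfl fun k _ => ?_
      rw [hgdef, hα_eq k]
    rw [Set.mem_compl_iff, Set.mem_union] at hwB
    push_neg at hwB
    obtain ⟨hw1, hw2⟩ := hwB
    rw [hbad1def, Set.mem_setOf_eq, not_le] at hw1
    rw [hbad2def, Set.mem_setOf_eq, not_le] at hw2
    have hsum_h : ∑ k : Fin N, h (w k) = (∑ k : Fin N, g (w k)) - (N : ℝ) * m := by
      rw [hhdef]
      rw [Finset.sum_sub_distrib, Finset.sum_const, Finset.card_univ, Fintype.card_fin,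
        nsmul_eq_mul]
    have hsum_h2 : ∑ k : Fin N, (m - g (w k)) = (N : ℝ) * m - ∑ k : Fin N, g (w k) := by
      rw [Finset.sum_sub_distrib, Finset.sum_const, Finset.card_univ, Fintype.card_fin,
        nsmul_eq_mul]
    rw [hsum_h] at hw1
    rw [hsum_h2] at hw2
    have habs : |(∑ k : Fin N, g (w k)) - (N : ℝ) * m| < (N : ℝ) * s :=
      abs_lt.2 ⟨by linarith, hw1⟩
    show |f x - (1 / (N : ℝ)) * ∑ k : Fin N,
        (if |α (w k)| ≤ T then α (w k) else 0) * φ x (w k)|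
      ≤ 12 * nf * Real.log (2 / δ) / Real.sqrt N
    rw [hsum_eq]
    have hmean_dist : |m - (1 / (N : ℝ)) * ∑ k : Fin N, g (w k)| < s := by
      have : m - (1 / (N : ℝ)) * ∑ k : Fin N, g (w k)
          = (1 / (N : ℝ)) * ((N : ℝ) * m - ∑ k : Fin N, g (w k)) := by
        field_simp
      rw [this, abs_mul, abs_of_pos (by positivity : (0:ℝ) < 1 / (N : ℝ)), abs_sub_comm]
      calc (1 / (N : ℝ)) * |(∑ k : Fin N, g (w k)) - (N : ℝ) * m|
          < (1 / (N : ℝ)) * ((N : ℝ) * s) := by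
            apply mul_lt_mul_of_pos_left habs (by positivity)
        _ = s := by field_simp
    calc |f x - (1 / (N : ℝ)) * ∑ k : Fin N, g (w k)|
        ≤ |f x - m| + |m - (1 / (N : ℝ)) * ∑ k : Fin N, g (w k)| := abs_sub_le _ _ _
      _ ≤ nf / Real.sqrt N + s := add_le_add hbias hmean_dist.le
      _ = 12 * nf * L / Real.sqrt N := by
          rw [hsdef]
          field_simp
          ring
  -- final assembly
  calc ENNReal.ofReal (1 - δ)
      ≤ 1 - ENNReal.ofReal δ := by
        rw [ENNReal.ofReal_sub _ hδ0.le, ENNReal.ofReal_one]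
    _ ≤ (Measure.pi fun _ : Fin N => ρ) ((bad1 ∪ bad2)ᶜ) := by
        rw [prob_compl_eq_one_sub hbad_meas]
        exact tsub_le_tsub_left hbad_le _
    _ = (Measure.pi fun _ : Fin N => ρ) ((bad1 ∪ bad2)ᶜ \ D) :=
        (measure_diff_null hD).symm
    _ ≤ _ := measure_mono hsubset
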